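/- In S_6, the pair of conjugacy classes of the permutations (1 2 3)(4 5 6) and (1 2 3 4)(5 6) is strictly transitive: for any σ conjugate to (1 2 3)(4 5 6) and any τ conjugate to (1 2 3 4)(5 6), the subgroup of S_6 generated by σ and τ acts transitively on {1,...,6}. -/

import Mathlib

private lemma s0_pow3 : ((Equiv.swap (0 : Fin 6) 1 * Equiv.swap 1 2) *
    (Equiv.swap (3 : Fin 6) 4 * Equiv.swap 4 5)) ^ 3 = 1 := by decide

private lemma s0_fpf : ∀ z : Fin 6, (((Equiv.swap (0 : Fin 6) 1 * Equiv.swap 1 2) *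
    (Equiv.swap (3 : Fin 6) 4 * Equiv.swap 4 5) : Equiv.Perm (Fin 6))) z ≠ z := by decide

private lemma t0_pow4 : ((Equiv.swap (0 : Fin 6) 1 * Equiv.swap 1 2 * Equiv.swap 2 3) *
    Equiv.swap (4 : Fin 6) 5) ^ 4 = 1 := by decide

private lemma t0_fpf : ∀ z : Fin 6, (((Equiv.swap (0 : Fin 6) 1 * Equiv.swap 1 2 * Equiv.swap 2 3) *
    Equiv.swap (4 : Fin 6) 5 : Equiv.Perm (Fin 6))) z ≠ z := by decide

private lemma t0_sq_ne : ((Equiv.swap (0 : Fin 6) 1 * Equiv.swap 1 2 * Equiv.swap 2 3) *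
    Equiv.swap (4 : Fin 6) 5) ^ 2 ≠ 1 := by decide

private lemma conj_pow_eq {G : Type*} [Group G] (a b : G) (n : ℕ) :
    (a * b * a⁻¹) ^ n = a * b ^ n * a⁻¹ := by
  simp [← map_pow (MulAut.conj a) b n]

private lemma conj_fpf (a p : Equiv.Perm (Fin 6)) (hp : ∀ z, p z ≠ z) :
    ∀ z, (a * p * a⁻¹) z ≠ z := by
  intro z h
  apply hp (a⁻¹ z)
  have := congrArg (⇑a⁻¹) h
  simpa [Equiv.Perm.mul_apply] using this

/-- In `S_6`, the pair of conjugacy classes of `(1 2 3)(4 5 6)` (two disjoint 3-cycles)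
and `(1 2 3 4)(5 6)` (a disjoint 4-cycle and 2-cycle) is strictly transitive: for any
`σ` conjugate to the first and `τ` conjugate to the second, the subgroup generated by
`σ` and `τ` acts transitively on the six points. -/
theorem strictly_transitive_33_42 (σ τ : Equiv.Perm (Fin 6))
    (hσ : IsConj ((Equiv.swap (0 : Fin 6) 1 * Equiv.swap 1 2) *
        (Equiv.swap (3 : Fin 6) 4 * Equiv.swap 4 5)) σ)
    (hτ : IsConj ((Equiv.swap (0 : Fin 6) 1 * Equiv.swap 1 2 * Equiv.swap 2 3) *
        Equiv.swap (4 : Fin 6) 5) τ) :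
    ∀ x y : Fin 6, ∃ g ∈ Subgroup.closure ({σ, τ} : Set (Equiv.Perm (Fin 6))), g x = y := by
  classical
  obtain ⟨a, ha⟩ := isConj_iff.mp hσ
  obtain ⟨b, hb⟩ := isConj_iff.mp hτ
  set K := Subgroup.closure ({σ, τ} : Set (Equiv.Perm (Fin 6))) with hK
  have hσK : σ ∈ K := Subgroup.subset_closure (Set.mem_insert _ _)
  have hτK : τ ∈ K := Subgroup.subset_closure (Set.mem_insert_iff.mpr (Or.inr rfl))
  -- basic facts about σ
  have hσ3 : σ ^ 3 = 1 := by rw [← ha, conj_pow_eq, s0_pow3]; group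
  have hσfpf : ∀ z, σ z ≠ z := by rw [← ha]; exact conj_fpf _ _ s0_fpf
  have hcube : ∀ z, σ (σ (σ z)) = z := by
    intro z
    have h1 : (σ ^ 3) z = z := by rw [hσ3]; rfl
    simpa [pow_succ, Equiv.Perm.mul_apply] using h1
  have hσ2fpf : ∀ z, σ (σ z) ≠ z := by
    intro z h
    apply hσfpf z
    have h2 := congrArg σ h
    rw [hcube z] at h2
    exact h2.symm
  -- basic facts about τ
  have hτ4 : ∀ z, τ (τ (τ (τ z))) = z := by
    intro z
    have h4 : τ ^ 4 = 1 := by rw [← hb, conj_pow_eq, t0_pow4]; group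
    have h1 : (τ ^ 4) z = z := by rw [h4]; rfl
    simpa [pow_succ, Equiv.Perm.mul_apply] using h1
  have hτfpf : ∀ z, τ z ≠ z := by rw [← hb]; exact conj_fpf _ _ t0_fpf
  have hτ2 : ∃ x, τ (τ x) ≠ x := by
    by_contra hcon
    push_neg at hcon
    apply t0_sq_ne
    have hτsq : τ ^ 2 = 1 := by
      apply Equiv.ext
      intro z
      simpa [pow_succ, Equiv.Perm.mul_apply] using hcon z
    rw [← hb, conj_pow_eq] at hτsq
    have := congrArg (fun g => b⁻¹ * g * b) hτsq
    simpa [mul_assoc] using this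
  obtain ⟨x, hx⟩ := hτ2
  -- the orbit of x
  set B : Finset (Fin 6) := Finset.univ.filter (fun z => ∃ g ∈ K, g x = z) with hB
  have memB : ∀ z, z ∈ B ↔ ∃ g ∈ K, g x = z := by
    intro z; simp [hB]
  -- orbit facts
  have hBx : x ∈ B := (memB x).mpr ⟨1, K.one_mem, rfl⟩
  have hτpow : ∀ n : ℕ, (τ ^ n) x ∈ B := fun n => (memB _).mpr ⟨τ ^ n, K.pow_mem hτK n, rfl⟩
  have hτ1B : τ x ∈ B := by simpa using hτpow 1
  have hτ2B : τ (τ x) ∈ B := by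
    have := hτpow 2
    simpa [pow_succ, Equiv.Perm.mul_apply] using this
  have hτ3B : τ (τ (τ x)) ∈ B := by
    have := hτpow 3
    simpa [pow_succ, Equiv.Perm.mul_apply] using this
  have hBσ : ∀ z, σ z ∈ B → z ∈ B := by
    intro z hz
    obtain ⟨g, hg, hgz⟩ := (memB _).mp hz
    refine (memB z).mpr ⟨σ * σ * g, K.mul_mem (K.mul_mem hσK hσK) hg, ?_⟩
    rw [Equiv.Perm.mul_apply, Equiv.Perm.mul_apply, hgz, hcube z]
  have hBσ' : ∀ z, z ∉ B → σ z ∉ B := fun z hz h => hz (hBσ z h)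
  -- distinctness of the τ-orbit of x
  set t1 := τ x with ht1
  set t2 := τ t1 with ht2
  set t3 := τ t2 with ht3
  have d01 : x ≠ t1 := fun h => hτfpf x h.symm
  have d02 : x ≠ t2 := fun h => hx h.symm
  have d03 : x ≠ t3 := by
    intro h
    apply hτfpf x
    calc τ x = τ t3 := by rw [← h]
    _ = x := hτ4 x
  have d12 : t1 ≠ t2 := fun h => hτfpf t1 h.symm
  have d13 : t1 ≠ t3 := fun h => d02 (τ.injective h)
  have d23 : t2 ≠ t3 := fun h => hτfpf t2 h.symm
  have hC : ({x, t1, t2, t3} : Finset (Fin 6)).card = 4 := by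
    rw [Finset.card_insert_of_notMem (by simp [d01, d02, d03]),
        Finset.card_insert_of_notMem (by simp [d12, d13]),
        Finset.card_insert_of_notMem (by simp [d23]),
        Finset.card_singleton]
  have hCB : ∀ z ∈ ({x, t1, t2, t3} : Finset (Fin 6)), z ∈ B := by
    intro z hz
    simp only [Finset.mem_insert, Finset.mem_singleton] at hz
    rcases hz with rfl | rfl | rfl | rfl
    · exact hBx
    · exact hτ1B
    · exact hτ2B
    · exact hτ3B
  -- every point is in B
  have hall : ∀ w : Fin 6, w ∈ B := by
    intro w
    by_contra hw
    have e1 : w ≠ σ w := fun h => hσfpf w h.symm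
    have e2 : w ≠ σ (σ w) := fun h => hσ2fpf w h.symm
    have e3 : σ w ≠ σ (σ w) := fun h => hσfpf (σ w) h.symm
    have hD : ({w, σ w, σ (σ w)} : Finset (Fin 6)).card = 3 := by
      rw [Finset.card_insert_of_notMem (by simp [e1, e2]),
          Finset.card_insert_of_notMem (by simp [e3]),
          Finset.card_singleton]
    have hDB : ∀ z ∈ ({w, σ w, σ (σ w)} : Finset (Fin 6)), z ∉ B := by
      intro z hz
      simp only [Finset.mem_insert, Finset.mem_singleton] at hz
      rcases hz with rfl | rfl | rfl
      · exact hw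
      · exact hBσ' _ hw
      · exact hBσ' _ (hBσ' _ hw)
    have hdisj : Disjoint ({x, t1, t2, t3} : Finset (Fin 6)) {w, σ w, σ (σ w)} := by
      rw [Finset.disjoint_left]
      intro z hz1 hz2
      exact hDB z hz2 (hCB z hz1)
    have hle : (({x, t1, t2, t3} ∪ {w, σ w, σ (σ w)} : Finset (Fin 6))).card ≤ 6 := by
      calc _ ≤ (Finset.univ : Finset (Fin 6)).card := Finset.card_le_card (Finset.subset_univ _)
      _ = 6 := by simp
    rw [Finset.card_union_of_disjoint hdisj, hC, hD] at hle
    omega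
  -- conclude
  intro u v
  obtain ⟨g1, hg1, e1⟩ := (memB u).mp (hall u)
  obtain ⟨g2, hg2, e2⟩ := (memB v).mp (hall v)
  refine ⟨g2 * g1⁻¹, K.mul_mem hg2 (K.inv_mem hg1), ?_⟩
  rw [Equiv.Perm.mul_apply, ← e1, Equiv.Perm.inv_def, Equiv.symm_apply_apply, e2]
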